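/- Let L be a De Morgan lattice and define the relation θ on L by: a θ b if and only if there exists f ∈ F_comp with (¬f ⊔ a) ⊓ f = (¬f ⊔ b) ⊓ f. Then θ is a congruence on L; ((x ⊓ ¬x) ⊔ y) θ y holds for all x, y ∈ L; and θ is contained in every congruence θ' on L satisfying ((x ⊓ ¬x) ⊔ y) θ' y for all x, y ∈ L. (That is, θ is the smallest congruence on L whose quotient is a Boolean lattice.) -/
import Mathlib


/-- A De Morgan lattice: a distributive lattice with an antitone involution. -/
class DeMorgan (L : Type*) extends DistribLattice L where
  dneg : L → L
  dneg_dneg : ∀ x : L, dneg (dneg x) = x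
  dneg_sup : ∀ x y : L, dneg (x ⊔ y) = dneg x ⊓ dneg y

prefix:max "∼" => DeMorgan.dneg

section Defs

variable {α : Type*}

/-- An upward closed subset of a lattice. -/
def IsUpset [Lattice α] (F : Set α) : Prop :=
  ∀ ⦃x y : α⦄, x ∈ F → x ≤ y → y ∈ F

/-- A lattice filter: an upset closed under binary meets. -/
def IsLatFilter [Lattice α] (F : Set α) : Prop :=
  IsUpset F ∧ ∀ x y : α, x ∈ F → y ∈ F → x ⊓ y ∈ F

/-- An `n`-filter: an upset such that for every nonempty finite `Y`, if the meet of
every nonempty subset of `Y` of size at most `n` lies in `F`, then so does the meet of `Y`. -/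
def IsNFilter [Lattice α] (n : ℕ) (F : Set α) : Prop :=
  IsUpset F ∧ ∀ (Y : Finset α) (hY : Y.Nonempty),
    (∀ (X : Finset α) (hX : X.Nonempty), X ⊆ Y → X.card ≤ n → X.inf' hX id ∈ F) →
    Y.inf' hY id ∈ F

/-- A prime upset: `x ⊔ y ∈ F` implies `x ∈ F` or `y ∈ F`. -/
def IsPrimeUpset [Lattice α] (F : Set α) : Prop :=
  ∀ x y : α, x ⊔ y ∈ F → x ∈ F ∨ y ∈ F

/-- A downward closed subset of a lattice. -/
def IsDownset [Lattice α] (I : Set α) : Prop :=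
  ∀ ⦃x y : α⦄, x ∈ I → y ≤ x → y ∈ I

/-- A lattice ideal: a downset closed under binary joins. -/
def IsIdeal [Lattice α] (I : Set α) : Prop :=
  IsDownset I ∧ ∀ x y : α, x ∈ I → y ∈ I → x ⊔ y ∈ I

/-- An `n`-ideal: the order dual notion of an `n`-filter. -/
def IsNIdeal [Lattice α] (n : ℕ) (I : Set α) : Prop :=
  IsDownset I ∧ ∀ (Y : Finset α) (hY : Y.Nonempty),
    (∀ (X : Finset α) (hX : X.Nonempty), X ⊆ Y → X.card ≤ n → X.sup' hX id ∈ I) →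
    Y.sup' hY id ∈ I

variable {L : Type*} [DeMorgan L]

/-- Almost complete upset: `x ∈ F` implies `x ⊓ (y ⊔ ∼y) ∈ F`. -/
def AlmostComplete (F : Set L) : Prop := ∀ x ∈ F, ∀ y : L, x ⊓ (y ⊔ ∼y) ∈ F

/-- Complete upset: almost complete and nonempty. -/
def IsCompleteUpset (F : Set L) : Prop := AlmostComplete F ∧ F.Nonempty

/-- Almost consistent upset: `(x ⊓ ∼x) ⊔ y ∈ F` implies `y ∈ F`. -/
def AlmostConsistent (F : Set L) : Prop := ∀ x y : L, (x ⊓ ∼x) ⊔ y ∈ F → y ∈ F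

/-- Consistent upset: almost consistent and not total. -/
def IsConsistentUpset (F : Set L) : Prop := AlmostConsistent F ∧ F ≠ Set.univ

/-- Classical upset: complete and consistent. -/
def IsClassicalUpset (F : Set L) : Prop := IsCompleteUpset F ∧ IsConsistentUpset F

/-- Kalman upset. -/
def IsKalmanUpset (F : Set L) : Prop :=
  ∀ x y z u : L, ((x ⊓ ∼x) ⊓ z) ⊔ u ∈ F → ((y ⊔ ∼y) ⊓ z) ⊔ u ∈ F

/-- A homomorphism of De Morgan lattices. -/
def IsDMHom {L M : Type*} [DeMorgan L] [DeMorgan M] (h : L → M) : Prop :=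
  (∀ x y : L, h (x ⊓ y) = h x ⊓ h y) ∧ (∀ x y : L, h (x ⊔ y) = h x ⊔ h y) ∧
    ∀ x : L, h (∼x) = ∼(h x)

/-- The filter generated by all elements of the form `x ⊔ ∼x`. -/
def Fcomp (L : Type*) [DeMorgan L] : Set L :=
  {a | ∃ (s : Finset L) (hs : s.Nonempty), s.inf' hs (fun x => x ⊔ ∼x) ≤ a}

/-- The `n`-filter generated by a set. -/
def nFilterGen (n : ℕ) (U : Set L) : Set L :=
  ⋂₀ {F : Set L | IsNFilter n F ∧ U ⊆ F}

/-- `Comp U`. -/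
def CompCl (U : Set L) : Set L := {x | ∃ a ∈ U, ∃ f ∈ Fcomp L, a ⊓ f ≤ x}

/-- `Cons U`. -/
def ConsCl (U : Set L) : Set L := {x | ∃ f ∈ Fcomp L, ∼f ⊔ x ∈ U}

/-- A congruence of De Morgan lattices, as a binary relation. -/
def IsCongruence (θ : L → L → Prop) : Prop :=
  Equivalence θ ∧
  (∀ a b c d : L, θ a b → θ c d → θ (a ⊓ c) (b ⊓ d)) ∧
  (∀ a b c d : L, θ a b → θ c d → θ (a ⊔ c) (b ⊔ d)) ∧
  ∀ a b : L, θ a b → θ (∼a) (∼b)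

end Defs

/-- The four-element De Morgan lattice `DM₁` on `Bool × Bool`. -/
instance : DeMorgan (Bool × Bool) :=
  { (inferInstance : DistribLattice (Bool × Bool)) with
    dneg := fun p => (!p.2, !p.1)
    dneg_dneg := by decide
    dneg_sup := by decide }

/-- Powers of `DM₁`, with componentwise operations. -/
instance {ι : Type*} : DeMorgan (ι → Bool × Bool) :=
  { (inferInstance : DistribLattice (ι → Bool × Bool)) with
    dneg := fun f i => ∼(f i)
    dneg_dneg := fun f => funext fun i => DeMorgan.dneg_dneg (f i)
    dneg_sup := fun f g => funext fun i => DeMorgan.dneg_sup (f i) (g i) }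

section Aux

variable {L : Type*} [DeMorgan L]

lemma dm_dd (x : L) : ∼∼x = x := DeMorgan.dneg_dneg x

lemma dm_inf (x y : L) : ∼(x ⊓ y) = ∼x ⊔ ∼y := by
  have h := DeMorgan.dneg_sup (∼x) (∼y)
  rw [dm_dd, dm_dd] at h
  rw [← h, dm_dd]

lemma dm_anti {x y : L} (h : x ≤ y) : ∼y ≤ ∼x := by
  have h2 : ∼(x ⊔ y) = ∼x ⊓ ∼y := DeMorgan.dneg_sup x y
  rw [sup_eq_right.mpr h] at h2
  rw [h2]; exact inf_le_left

/-- If the relativized equality holds at `f`, it holds at any `h ≤ f`. -/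
lemma eq_mono {f h a b : L} (hle : h ≤ f)
    (heq : (∼f ⊔ a) ⊓ f = (∼f ⊔ b) ⊓ f) :
    (∼h ⊔ a) ⊓ h = (∼h ⊔ b) ⊓ h := by
  have hf : ∼f ≤ ∼h := dm_anti hle
  have key : ∀ c : L, (∼h ⊔ c) ⊓ h = (∼h ⊓ h) ⊔ ((∼f ⊔ c) ⊓ f ⊓ h) := by
    intro c
    have h1 : (∼f ⊔ c) ⊓ f ⊓ h = (∼f ⊔ c) ⊓ h := by
      rw [inf_assoc, inf_eq_right.mpr hle]
    rw [h1, inf_sup_right, inf_sup_right, ← sup_assoc,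
      sup_eq_left.mpr (inf_le_inf_right h hf)]
  rw [key a, key b, heq]

lemma mem_Fcomp_inf' (s : Finset L) (hs : s.Nonempty) :
    s.inf' hs (fun x => x ⊔ ∼x) ∈ Fcomp L := ⟨s, hs, le_rfl⟩

lemma mem_Fcomp_single (x : L) : x ⊔ ∼x ∈ Fcomp L := by
  have := mem_Fcomp_inf' ({x} : Finset L) ⟨x, Finset.mem_singleton_self x⟩
  simpa using this

/-- `(g ⊓ y) θ' y` for any "complete" element `g`. -/
lemma theta'_inf {θ' : L → L → Prop} (hc : IsCongruence θ')
    (hb : ∀ x y : L, θ' ((x ⊓ ∼x) ⊔ y) y)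
    (s : Finset L) (hs : s.Nonempty) :
    ∀ y : L, θ' ((s.inf' hs (fun x => x ⊔ ∼x)) ⊓ y) y := by
  obtain ⟨heq, hm, hj, hn⟩ := hc
  have base : ∀ x y : L, θ' ((x ⊔ ∼x) ⊓ y) y := by
    intro x y
    have h1 := hn _ _ (hb x (∼y))
    rw [DeMorgan.dneg_sup, dm_inf, dm_dd, dm_dd] at h1
    have h2 : (∼x ⊔ x) ⊓ y = (x ⊔ ∼x) ⊓ y := by rw [sup_comm]
    rw [h2] at h1
    exact h1
  induction hs using Finset.Nonempty.cons_induction with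
  | singleton a => intro y; simpa using base a y
  | cons a s h hs ih =>
    intro y
    rw [Finset.inf'_cons hs, inf_assoc]
    exact heq.trans (base a _) (ih y)

/-- `(∼g ⊔ y) θ' y` for any "complete" element `g`. -/
lemma theta'_sup {θ' : L → L → Prop} (hc : IsCongruence θ')
    (hb : ∀ x y : L, θ' ((x ⊓ ∼x) ⊔ y) y)
    (s : Finset L) (hs : s.Nonempty) (y : L) :
    θ' (∼(s.inf' hs (fun x => x ⊔ ∼x)) ⊔ y) y := by
  have h1 := hc.1 -- equivalence
  have h := hc.2.2.2 _ _ (theta'_inf hc hb s hs (∼y))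
  rw [dm_inf, dm_dd] at h
  exact h

end Aux

/-- the smallest congruence of a De Morgan lattice whose quotient is a Boolean
lattice. -/
theorem statement8 {L : Type*} [DeMorgan L] [Nonempty L] (θ : L → L → Prop)
    (hθ : ∀ a b : L, θ a b ↔ ∃ f ∈ Fcomp L, (∼f ⊔ a) ⊓ f = (∼f ⊔ b) ⊓ f) :
    IsCongruence θ ∧
    (∀ x y : L, θ ((x ⊓ ∼x) ⊔ y) y) ∧
    (∀ θ' : L → L → Prop, IsCongruence θ' →
      (∀ x y : L, θ' ((x ⊓ ∼x) ⊔ y) y) →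
      ∀ a b : L, θ a b → θ' a b) := by
  classical
  obtain ⟨x0⟩ := ‹Nonempty L›
  have hrefl : ∀ a : L, θ a a := fun a =>
    (hθ a a).mpr ⟨x0 ⊔ ∼x0, mem_Fcomp_single x0, rfl⟩
  have hsymm : ∀ a b : L, θ a b → θ b a := by
    intro a b h; rw [hθ] at h ⊢; obtain ⟨f, hf, e⟩ := h; exact ⟨f, hf, e.symm⟩
  -- common witness for two θ-pairs
  have common : ∀ {a b c d : L}, θ a b → θ c d →
      ∃ h ∈ Fcomp L, ((∼h ⊔ a) ⊓ h = (∼h ⊔ b) ⊓ h) ∧ ((∼h ⊔ c) ⊓ h = (∼h ⊔ d) ⊓ h) := by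
    intro a b c d h1 h2
    rw [hθ] at h1 h2
    obtain ⟨f, ⟨s, hs, hsf⟩, e1⟩ := h1
    obtain ⟨g, ⟨t, ht, htg⟩, e2⟩ := h2
    have hst : (s ∪ t).Nonempty := hs.mono Finset.subset_union_left
    refine ⟨(s ∪ t).inf' hst (fun x => x ⊔ ∼x), mem_Fcomp_inf' _ _, ?_, ?_⟩
    · exact eq_mono (le_trans (Finset.inf'_mono _ Finset.subset_union_left hs) hsf) e1
    · exact eq_mono (le_trans (Finset.inf'_mono _ Finset.subset_union_right ht) htg) e2
  have htrans : ∀ a b c : L, θ a b → θ b c → θ a c := by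
    intro a b c h1 h2
    obtain ⟨h, hh, e1, e2⟩ := common h1 h2
    exact (hθ a c).mpr ⟨h, hh, e1.trans e2⟩
  have hinf : ∀ a b c d : L, θ a b → θ c d → θ (a ⊓ c) (b ⊓ d) := by
    intro a b c d h1 h2
    obtain ⟨h, hh, e1, e2⟩ := common h1 h2
    refine (hθ _ _).mpr ⟨h, hh, ?_⟩
    have key : ∀ u v : L, (∼h ⊔ u ⊓ v) ⊓ h = ((∼h ⊔ u) ⊓ h) ⊓ ((∼h ⊔ v) ⊓ h) := by
      intro u v
      rw [sup_inf_left, inf_inf_distrib_right]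
    rw [key, key, e1, e2]
  have hsup : ∀ a b c d : L, θ a b → θ c d → θ (a ⊔ c) (b ⊔ d) := by
    intro a b c d h1 h2
    obtain ⟨h, hh, e1, e2⟩ := common h1 h2
    refine (hθ _ _).mpr ⟨h, hh, ?_⟩
    have key : ∀ u v : L, (∼h ⊔ (u ⊔ v)) ⊓ h = ((∼h ⊔ u) ⊓ h) ⊔ ((∼h ⊔ v) ⊓ h) := by
      intro u v
      rw [← inf_sup_right]
      congr 1
      rw [sup_sup_sup_comm, sup_idem]
    rw [key, key, e1, e2]
  have hneg : ∀ a b : L, θ a b → θ (∼a) (∼b) := by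
    intro a b h1
    rw [hθ] at h1 ⊢
    obtain ⟨f, hf, e⟩ := h1
    refine ⟨f, hf, ?_⟩
    have e2 := congrArg (fun z => ∼z ⊓ f) e
    simp only [dm_inf, DeMorgan.dneg_sup, dm_dd] at e2
    have key : ∀ u : L, ((f ⊓ u) ⊔ ∼f) ⊓ f = (∼f ⊔ u) ⊓ f := by
      intro u
      rw [inf_sup_right, inf_sup_right, inf_right_comm, inf_idem,
        sup_comm (f ⊓ u) (∼f ⊓ f), inf_comm f u]
    rw [← key (∼a), ← key (∼b)]
    exact e2
  have hcong : IsCongruence θ :=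
    ⟨⟨hrefl, fun {a b} h => hsymm a b h, fun {a b c} h1 h2 => htrans a b c h1 h2⟩,
      hinf, hsup, hneg⟩
  have bullet2 : ∀ x y : L, θ ((x ⊓ ∼x) ⊔ y) y := by
    intro x y
    refine (hθ _ _).mpr ⟨x ⊔ ∼x, mem_Fcomp_single x, ?_⟩
    have h1 : ∼(x ⊔ ∼x) = x ⊓ ∼x := by rw [DeMorgan.dneg_sup, dm_dd, inf_comm]
    rw [h1, ← sup_assoc, sup_idem]
  refine ⟨hcong, bullet2, ?_⟩
  intro θ' hc hb a b hab
  rw [hθ] at hab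
  obtain ⟨f, ⟨s, hs, hsf⟩, e⟩ := hab
  have e' : (∼(s.inf' hs (fun x => x ⊔ ∼x)) ⊔ a) ⊓ s.inf' hs (fun x => x ⊔ ∼x) =
      (∼(s.inf' hs (fun x => x ⊔ ∼x)) ⊔ b) ⊓ s.inf' hs (fun x => x ⊔ ∼x) := eq_mono hsf e
  set g := s.inf' hs (fun x => x ⊔ ∼x) with hg
  have step : ∀ c : L, θ' c ((∼g ⊔ c) ⊓ g) := by
    intro c
    have h1 : θ' (∼g ⊔ c) c := theta'_sup hc hb s hs c
    have h2 : θ' ((∼g ⊔ c) ⊓ g) (c ⊓ g) := hc.2.1 _ _ _ _ h1 (hc.1.refl g)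
    have h3 : θ' (g ⊓ c) c := theta'_inf hc hb s hs c
    have h4 : θ' (c ⊓ g) c := by rw [inf_comm]; exact h3
    exact hc.1.symm (hc.1.trans h2 h4)
  exact hc.1.trans (step a) (by rw [e']; exact hc.1.symm (step b))
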